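/- Let d ≥ 1 and h > 0. For every polynomial p : ℝ^d → ℂ there exists a polynomial P : ℂ^d → ℂ with deg P = deg p such that for all x ∈ ℂ^d: ∫_{ℝ^d} exp(−((x−y)·(x−y))/(2h)) · p(y) · exp(−(y·y)/(2h)) dy = P(x) · exp(−(x·x)/(4h)), where z·w = Σ_{j=1}^d z_j w_j denotes the bilinear (holomorphic) dot product. Moreover, for each n ≥ 0 the induced linear map p ↦ P is a bijection from the polynomials of degree ≤ n on ℝ^d to the polynomials of degree ≤ n on ℂ^d. -/

import Mathlib

set_option maxHeartbeats 1000000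

open Matrix MeasureTheory

noncomputable section

open Finset Filter Metric
section FBIaux

lemma aux_int' {b : ℝ} (hb : 0 < b) (k : ℕ) :
    MeasureTheory.Integrable (fun t : ℝ => |t| ^ k * Real.exp (-b * t ^ 2)) := by
  have h1 : MeasureTheory.Integrable (fun t : ℝ => Real.exp (-b * t ^ 2)) :=
    integrable_exp_neg_mul_sq hb
  have h2 : MeasureTheory.Integrable (fun t : ℝ => t ^ (2 * k) * Real.exp (-b * t ^ 2)) := by
    have h0 : (-1:ℝ) < ((2 * k : ℕ) : ℝ) :=
      lt_of_lt_of_le (by norm_num) (Nat.cast_nonneg _)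
    have := integrable_rpow_mul_exp_neg_mul_sq hb (s := ((2 * k : ℕ) : ℝ)) h0
    simp only [Real.rpow_natCast] at this
    exact this
  refine (h1.add h2).mono' ?_ ?_
  · exact ((_root_.continuous_abs.pow k).mul
      ((continuous_const.mul (continuous_pow 2)).rexp)).aestronglyMeasurable
  · filter_upwards with t
    have hexp : 0 < Real.exp (-b * t ^ 2) := Real.exp_pos _
    have heq : |t| ^ (2 * k) = t ^ (2 * k) := (even_two_mul k).pow_abs t
    have habs : |t| ^ k ≤ 1 + t ^ (2 * k) := by
      rcases le_total (|t|) 1 with ht | ht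
      · have h1' : |t| ^ k ≤ 1 := pow_le_one₀ (abs_nonneg t) ht
        have h2' : (0:ℝ) ≤ t ^ (2*k) := by rw [← heq]; positivity
        linarith
      · have h2' : |t| ^ k ≤ |t| ^ (2 * k) := pow_le_pow_right₀ ht (by omega)
        linarith [heq ▸ h2']
    have hn : ‖|t| ^ k * Real.exp (-b * t ^ 2)‖ = |t| ^ k * Real.exp (-b * t ^ 2) := by
      rw [Real.norm_eq_abs, _root_.abs_of_nonneg (by positivity)]
    rw [hn]
    calc |t| ^ k * Real.exp (-b * t ^ 2) ≤ (1 + t ^ (2 * k)) * Real.exp (-b * t ^ 2) :=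
          mul_le_mul_of_nonneg_right habs hexp.le
      _ = Real.exp (-b * t ^ 2) + t ^ (2 * k) * Real.exp (-b * t ^ 2) := by ring

lemma aux_re' {h : ℝ} (hh : 0 < h) (z : ℂ) (t : ℝ) :
    (-(((t : ℂ) - z) ^ 2) / (h : ℂ)).re = (z.im ^ 2 - (t - z.re) ^ 2) / h := by
  rw [div_eq_inv_mul, ← Complex.ofReal_inv, Complex.re_ofReal_mul, Complex.neg_re, pow_two,
    Complex.mul_re, Complex.sub_re, Complex.sub_im, Complex.ofReal_re, Complex.ofReal_im]
  field_simp
  ring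

lemma aux_norm' {h : ℝ} (hh : 0 < h) (z : ℂ) (t : ℝ) :
    ‖Complex.exp (-(((t : ℂ) - z) ^ 2) / (h : ℂ))‖ ≤
      Real.exp (‖z‖ ^ 2 / h) * Real.exp (-(1 / (2 * h)) * t ^ 2) := by
  rw [Complex.norm_exp, ← Real.exp_add]
  apply Real.exp_le_exp.2
  rw [aux_re' hh]
  have hz : ‖z‖ ^ 2 = z.re ^ 2 + z.im ^ 2 := by
    rw [Complex.sq_norm, Complex.normSq_apply]; ring
  have expand : ‖z‖ ^ 2 / h + -(1 / (2 * h)) * t ^ 2 = (z.re ^ 2 + z.im ^ 2 - t ^ 2 / 2) / h := by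
    rw [hz]; field_simp; ring
  rw [expand, div_le_div_iff₀ hh hh]
  nlinarith [sq_nonneg (t - 2 * z.re), hh.le]

def Mm (h : ℝ) (k : ℕ) : ℂ := ∫ t : ℝ, (t : ℂ) ^ k * Complex.exp (-((t : ℂ) ^ 2) / (h : ℂ))

def FF (h : ℝ) (m : ℕ) (z : ℂ) : ℂ :=
  ∫ t : ℝ, (t : ℂ) ^ m * Complex.exp (-(((t : ℂ) - z) ^ 2) / (h : ℂ))

def GG (h : ℝ) (m : ℕ) (z : ℂ) : ℂ :=
  ∑ j ∈ Finset.range (m + 1), (m.choose j : ℂ) * z ^ j * Mm h (m - j)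

variable {h : ℝ}

lemma intF (hh : 0 < h) (m : ℕ) (z : ℂ) :
    Integrable (fun t : ℝ => (t : ℂ) ^ m * Complex.exp (-(((t : ℂ) - z) ^ 2) / (h : ℂ))) := by
  have hb : (0:ℝ) < 1 / (2 * h) := by positivity
  refine (((aux_int' hb m).const_mul (Real.exp (‖z‖ ^ 2 / h))).mono' ?_ ?_)
  · apply Continuous.aestronglyMeasurable
    fun_prop
  · filter_upwards with t
    rw [norm_mul]
    have hnt : ‖(t:ℂ) ^ m‖ = |t| ^ m := by
      rw [norm_pow, Complex.norm_real, Real.norm_eq_abs]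
    rw [hnt]
    calc |t| ^ m * ‖Complex.exp (-(((t : ℂ) - z) ^ 2) / (h : ℂ))‖
        ≤ |t| ^ m * (Real.exp (‖z‖ ^ 2 / h) * Real.exp (-(1 / (2 * h)) * t ^ 2)) :=
          mul_le_mul_of_nonneg_left (aux_norm' hh z t) (by positivity)
      _ = Real.exp (‖z‖ ^ 2 / h) * (|t| ^ m * Real.exp (-(1 / (2 * h)) * t ^ 2)) := by ring

lemma intM (hh : 0 < h) (k : ℕ) :
    Integrable (fun t : ℝ => (t : ℂ) ^ k * Complex.exp (-((t : ℂ) ^ 2) / (h : ℂ))) := by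
  have := intF hh k 0
  simpa using this

lemma lemA_real (hh : 0 < h) (m : ℕ) (r : ℝ) : FF h m (r : ℂ) = GG h m (r : ℂ) := by
  have step1 : FF h m (r : ℂ) =
      ∫ t : ℝ, ((t : ℂ) + (r : ℂ)) ^ m * Complex.exp (-((t : ℂ) ^ 2) / (h : ℂ)) := by
    rw [FF, ← integral_add_right_eq_self
      (fun t : ℝ => (t : ℂ) ^ m * Complex.exp (-(((t : ℂ) - (r:ℂ)) ^ 2) / (h : ℂ))) r]
    congr 1
    funext t
    push_cast
    ring_nf
  rw [step1]
  have step2 : ∀ t : ℝ, ((t : ℂ) + (r : ℂ)) ^ m * Complex.exp (-((t : ℂ) ^ 2) / (h : ℂ)) =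
      ∑ k ∈ Finset.range (m + 1), ((r : ℂ) ^ (m - k) * (m.choose k : ℂ)) *
        ((t : ℂ) ^ k * Complex.exp (-((t : ℂ) ^ 2) / (h : ℂ))) := by
    intro t
    rw [add_pow, Finset.sum_mul]
    exact Finset.sum_congr rfl fun k _ => by ring
  simp_rw [step2]
  rw [integral_finset_sum _ (fun k _ => (intM hh k).const_mul _)]
  have step3 : ∀ k ∈ Finset.range (m + 1),
      (∫ t : ℝ, ((r : ℂ) ^ (m - k) * (m.choose k : ℂ)) *
        ((t : ℂ) ^ k * Complex.exp (-((t : ℂ) ^ 2) / (h : ℂ)))) =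
      (r : ℂ) ^ (m - k) * (m.choose k : ℂ) * Mm h k := fun k _ => integral_const_mul _ _
  rw [Finset.sum_congr rfl step3, GG]
  rw [← Finset.sum_range_reflect]
  refine Finset.sum_congr rfl fun j hj => ?_
  rw [Finset.mem_range] at hj
  have hjm : j ≤ m := by omega
  have e1 : m + 1 - 1 - j = m - j := by omega
  have e2 : m - (m - j) = j := by omega
  rw [e1, e2, Nat.choose_symm hjm]
  ring

lemma FF_diff (hh : 0 < h) (m : ℕ) : Differentiable ℂ (FF h m) := by
  intro z₀
  set R : ℝ := ‖z₀‖ + 1 with hR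
  have hb : (0:ℝ) < 1 / (2 * h) := by positivity
  set bound : ℝ → ℝ := fun t =>
    (2 / h) * Real.exp (R ^ 2 / h) *
      ((|t| ^ (m + 1) + R * |t| ^ m) * Real.exp (-(1 / (2 * h)) * t ^ 2)) with hbdef
  have bound_int : Integrable bound := by
    refine Integrable.const_mul ?_ _
    have : (fun t : ℝ => (|t| ^ (m + 1) + R * |t| ^ m) * Real.exp (-(1 / (2 * h)) * t ^ 2)) =
        fun t : ℝ => |t| ^ (m + 1) * Real.exp (-(1 / (2 * h)) * t ^ 2) +
          R * (|t| ^ m * Real.exp (-(1 / (2 * h)) * t ^ 2)) := by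
      funext t; ring
    rw [this]
    exact (aux_int' hb (m + 1)).add ((aux_int' hb m).const_mul R)
  have key := hasDerivAt_integral_of_dominated_loc_of_deriv_le (μ := volume)
    (F := fun z (t : ℝ) => (t : ℂ) ^ m * Complex.exp (-(((t : ℂ) - z) ^ 2) / (h : ℂ)))
    (F' := fun z (t : ℝ) => (t : ℂ) ^ m *
      (Complex.exp (-(((t : ℂ) - z) ^ 2) / (h : ℂ)) * (2 * ((t : ℂ) - z) / (h : ℂ))))
    (x₀ := z₀) (bound := bound) (s := Metric.ball z₀ 1) (Metric.ball_mem_nhds z₀ one_pos)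
    (Eventually.of_forall fun z => (Continuous.aestronglyMeasurable (by fun_prop)))
    (intF hh m z₀) (Continuous.aestronglyMeasurable (by fun_prop))
    ?_ bound_int ?_
  · exact key.2.differentiableAt
  · -- bound
    filter_upwards with t z hz
    have hzR : ‖z‖ ≤ R := by
      have h1 : ‖z‖ ≤ ‖z₀‖ + ‖z - z₀‖ := norm_le_norm_add_norm_sub' z z₀
      have h2 := (mem_ball_iff_norm.1 hz).le
      rw [hR]; linarith
    rw [norm_mul, norm_mul]
    have hnt : ‖(t:ℂ) ^ m‖ = |t| ^ m := by
      rw [norm_pow, Complex.norm_real, Real.norm_eq_abs]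
    have hlin : ‖2 * ((t : ℂ) - z) / (h : ℂ)‖ ≤ 2 / h * (|t| + R) := by
      rw [norm_div, norm_mul]
      have h1 : ‖(t:ℂ) - z‖ ≤ |t| + R := by
        calc ‖(t:ℂ) - z‖ ≤ ‖(t:ℂ)‖ + ‖z‖ := norm_sub_le _ _
          _ ≤ |t| + R := by rw [Complex.norm_real, Real.norm_eq_abs]; linarith
      have h2 : ‖(h:ℂ)‖ = h := by
        rw [Complex.norm_real, Real.norm_eq_abs, abs_of_pos hh]
      have h3 : ‖(2:ℂ)‖ = 2 := by norm_num
      rw [h2, h3, div_mul_eq_mul_div]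
      gcongr
    have hexp : ‖Complex.exp (-(((t : ℂ) - z) ^ 2) / (h : ℂ))‖ ≤
        Real.exp (R ^ 2 / h) * Real.exp (-(1 / (2 * h)) * t ^ 2) := by
      refine (aux_norm' hh z t).trans ?_
      have hA : Real.exp (‖z‖ ^ 2 / h) ≤ Real.exp (R ^ 2 / h) := by
        apply Real.exp_le_exp.2
        gcongr
      exact mul_le_mul_of_nonneg_right hA (Real.exp_pos _).le
    calc ‖(t:ℂ) ^ m‖ * (‖Complex.exp (-(((t : ℂ) - z) ^ 2) / (h : ℂ))‖ *
          ‖2 * ((t : ℂ) - z) / (h : ℂ)‖)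
        ≤ |t| ^ m * ((Real.exp (R ^ 2 / h) * Real.exp (-(1 / (2 * h)) * t ^ 2)) *
            (2 / h * (|t| + R))) := by
          rw [hnt]
          refine mul_le_mul_of_nonneg_left ?_ (by positivity)
          exact mul_le_mul hexp hlin (norm_nonneg _) (by positivity)
      _ = bound t := by rw [hbdef]; ring
  · -- differentiability
    filter_upwards with t z _
    have h0 : HasDerivAt (fun z : ℂ => (t : ℂ) - z) (-1) z := by
      simpa using (hasDerivAt_id z).const_sub (t : ℂ)
    have h1 : HasDerivAt (fun z : ℂ => -(((t : ℂ) - z) ^ 2) / (h : ℂ))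
        (2 * ((t : ℂ) - z) / (h : ℂ)) z := by
      have h2 := ((h0.pow 2).neg).div_const (h : ℂ)
      refine h2.congr_deriv ?_
      ring
    have h3 := h1.cexp
    simpa using (h3.const_mul ((t : ℂ) ^ m))

lemma GG_diff (m : ℕ) : Differentiable ℂ (GG h m) := by
  unfold GG
  fun_prop

lemma lemA (hh : 0 < h) (m : ℕ) (z : ℂ) : FF h m z = GG h m z := by
  have hF : AnalyticOnNhd ℂ (FF h m) Set.univ :=
    (FF_diff hh m).differentiableOn.analyticOnNhd isOpen_univ
  have hG : AnalyticOnNhd ℂ (GG h m) Set.univ :=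
    (GG_diff m).differentiableOn.analyticOnNhd isOpen_univ
  have ht : Tendsto (fun n : ℕ => ((1 / (n + 1) : ℝ) : ℂ)) atTop (nhdsWithin 0 {(0:ℂ)}ᶜ) := by
    apply tendsto_nhdsWithin_of_tendsto_nhds_of_eventually_within
    · have h1 : Tendsto (fun n : ℕ => (1 / (n + 1) : ℝ)) atTop (nhds 0) :=
        tendsto_one_div_add_atTop_nhds_zero_nat
      have := (Complex.continuous_ofReal.tendsto 0).comp h1
      simpa [Function.comp_def, one_div] using this
    · filter_upwards with n
      simp only [Set.mem_compl_iff, Set.mem_singleton_iff]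
      intro hc
      have : (1 / (n + 1) : ℝ) = 0 := by exact_mod_cast hc
      have : (0:ℝ) < 1 / (n + 1) := by positivity
      linarith
  have freq : ∃ᶠ z' in nhdsWithin 0 {(0:ℂ)}ᶜ, FF h m z' = GG h m z' :=
    ht.frequently (Eventually.frequently (Eventually.of_forall fun n => lemA_real hh m _))
  exact hF.eqOn_of_preconnected_of_frequently_eq hG isPreconnected_univ (Set.mem_univ 0)
    freq (Set.mem_univ z)

lemma Mm0 (hh : 0 < h) : Mm h 0 = ((Real.sqrt (Real.pi * h) : ℝ) : ℂ) := by
  rw [Mm]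
  have : ∀ t : ℝ, (t : ℂ) ^ 0 * Complex.exp (-((t : ℂ) ^ 2) / (h : ℂ)) =
      ((Real.exp (-(1/h) * t ^ 2) : ℝ) : ℂ) := by
    intro t
    rw [pow_zero, one_mul, Complex.ofReal_exp]
    congr 1
    push_cast
    field_simp
  simp_rw [this]
  have h2 : (∫ (t : ℝ), ((Real.exp (-(1/h) * t ^ 2) : ℝ) : ℂ)) =
      ((∫ (t : ℝ), Real.exp (-(1/h) * t ^ 2) : ℝ) : ℂ) := integral_ofReal
  rw [h2, integral_gaussian]
  norm_cast
  congr 1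
  field_simp

lemma Mm0_ne (hh : 0 < h) : Mm h 0 ≠ 0 := by
  rw [Mm0 hh]
  simp only [ne_eq, Complex.ofReal_eq_zero]
  have : 0 < Real.sqrt (Real.pi * h) := Real.sqrt_pos.2 (by positivity)
  linarith

def cc (h : ℝ) (m j : ℕ) : ℂ := (m.choose j : ℂ) * Mm h (m - j) / 2 ^ j

def Qp (d : ℕ) (h : ℝ) (α : Fin d →₀ ℕ) : MvPolynomial (Fin d) ℂ :=
  ∑ b ∈ Fintype.piFinset (fun i => Finset.range (α i + 1)),
    (∏ i, cc h (α i) (b i)) • MvPolynomial.monomial (Finsupp.equivFunOnFinite.symm b) 1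

lemma eval_Qp (d : ℕ) (h : ℝ) (α : Fin d →₀ ℕ) (x : Fin d → ℂ) :
    MvPolynomial.eval x (Qp d h α) = ∏ i, GG h (α i) (x i / 2) := by
  rw [Qp, map_sum]
  have step : ∀ b ∈ Fintype.piFinset (fun i => Finset.range (α i + 1)),
      MvPolynomial.eval x ((∏ i, cc h (α i) (b i)) •
        MvPolynomial.monomial (Finsupp.equivFunOnFinite.symm b) (1:ℂ)) =
      ∏ i, (cc h (α i) (b i) * x i ^ (b i)) := by
    intro b _
    rw [MvPolynomial.smul_eval, MvPolynomial.eval_monomial, one_mul,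
      Finsupp.prod_fintype _ _ (fun i => pow_zero _), ← Finset.prod_mul_distrib]
    exact Finset.prod_congr rfl fun i _ => by
      rfl
  rw [Finset.sum_congr rfl step]
  calc ∑ b ∈ Fintype.piFinset (fun i => Finset.range (α i + 1)),
        ∏ i, (cc h (α i) (b i) * x i ^ (b i))
      = ∏ i, ∑ j ∈ Finset.range (α i + 1), cc h (α i) j * x i ^ j :=
        (Finset.prod_univ_sum (fun i => Finset.range (α i + 1))
          (fun i j => cc h (α i) j * x i ^ j)).symm
    _ = ∏ i, GG h (α i) (x i / 2) := by
        refine Finset.prod_congr rfl fun i _ => ?_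
        rw [GG]
        exact Finset.sum_congr rfl fun j _ => by rw [cc]; field_simp; rw [mul_assoc _ ((2:ℂ)^j), ← mul_pow]; congr 2; ring

lemma coeff_Qp (d : ℕ) (h : ℝ) (α γ : Fin d →₀ ℕ) :
    MvPolynomial.coeff γ (Qp d h α) =
      if ∀ i, γ i ≤ α i then ∏ i, cc h (α i) (γ i) else 0 := by
  rw [Qp, MvPolynomial.coeff_sum]
  have step : ∀ b ∈ Fintype.piFinset (fun i => Finset.range (α i + 1)),
      MvPolynomial.coeff γ ((∏ i, cc h (α i) (b i)) •
        MvPolynomial.monomial (Finsupp.equivFunOnFinite.symm b) (1:ℂ)) =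
      if b = Finsupp.equivFunOnFinite γ then ∏ i, cc h (α i) (b i) else 0 := by
    intro b _
    rw [MvPolynomial.coeff_smul, MvPolynomial.coeff_monomial]
    by_cases hbe : b = Finsupp.equivFunOnFinite γ
    · rw [if_pos ((Equiv.symm_apply_eq _).2 hbe), if_pos hbe, smul_eq_mul, mul_one]
    · rw [if_neg (fun hc => hbe ((Equiv.symm_apply_eq _).1 hc)), if_neg hbe, smul_eq_mul,
        mul_zero]
  rw [Finset.sum_congr rfl step, Finset.sum_ite_eq' _ (Finsupp.equivFunOnFinite γ)
    (fun b => ∏ i, cc h (α i) (b i))]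
  have hmem : (Finsupp.equivFunOnFinite γ ∈ Fintype.piFinset (fun i => Finset.range (α i + 1)))
      ↔ ∀ i, γ i ≤ α i := by
    simp [Fintype.mem_piFinset, Nat.lt_succ_iff, Finsupp.equivFunOnFinite]
  by_cases hc : ∀ i, γ i ≤ α i
  · rw [if_pos (hmem.2 hc), if_pos hc]
    rfl
  · rw [if_neg (fun hx => hc (hmem.1 hx)), if_neg hc]

def Tmap (d : ℕ) (h : ℝ) : MvPolynomial (Fin d) ℂ →ₗ[ℂ] MvPolynomial (Fin d) ℂ :=
  Finsupp.lsum ℂ (fun α => LinearMap.toSpanSingleton ℂ _ (Qp d h α)) ∘ₗ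
    (AddMonoidAlgebra.coeffLinearEquiv ℂ).toLinearMap

lemma Tmap_apply (d : ℕ) (h : ℝ) (p : MvPolynomial (Fin d) ℂ) :
    Tmap d h p = ∑ α ∈ p.support, MvPolynomial.coeff α p • Qp d h α := by
  rfl

variable {d : ℕ}

lemma cc_diag_ne (hM : Mm h 0 ≠ 0) (m : ℕ) : cc h m m ≠ 0 := by
  rw [cc, Nat.choose_self, Nat.sub_self]
  simp only [Nat.cast_one, one_mul]
  exact div_ne_zero hM (pow_ne_zero _ two_ne_zero)

lemma sum_fin (α : Fin d →₀ ℕ) : (α.sum fun _ e => e) = ∑ i, α i :=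
  Finsupp.sum_fintype _ _ fun i => rfl

lemma deg_Qp (α : Fin d →₀ ℕ) : (Qp d h α).totalDegree ≤ α.sum fun _ e => e := by
  apply Finset.sup_le
  intro γ hγ
  rw [MvPolynomial.mem_support_iff, coeff_Qp] at hγ
  by_cases hc : ∀ i, γ i ≤ α i
  · rw [sum_fin, sum_fin]
    exact Finset.sum_le_sum fun i _ => hc i
  · exact absurd (if_neg hc) hγ

lemma deg_T_le (p : MvPolynomial (Fin d) ℂ) :
    (Tmap d h p).totalDegree ≤ p.totalDegree := by
  rw [Tmap_apply]
  refine (MvPolynomial.totalDegree_finset_sum _ _).trans (Finset.sup_le fun α hα => ?_)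
  refine (MvPolynomial.totalDegree_smul_le _ _).trans ((deg_Qp α).trans ?_)
  exact MvPolynomial.le_totalDegree hα

lemma coeff_T_top (p : MvPolynomial (Fin d) ℂ) (α : Fin d →₀ ℕ) (hα : α ∈ p.support)
    (hmax : p.totalDegree ≤ α.sum fun _ e => e) :
    MvPolynomial.coeff α (Tmap d h p) =
      MvPolynomial.coeff α p * ∏ i, cc h (α i) (α i) := by
  rw [Tmap_apply, MvPolynomial.coeff_sum]
  have key : ∀ β ∈ p.support, MvPolynomial.coeff α (MvPolynomial.coeff β p • Qp d h β) =
      if β = α then MvPolynomial.coeff α p * ∏ i, cc h (α i) (α i) else 0 := by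
    intro β hβ
    rw [MvPolynomial.coeff_smul, smul_eq_mul, coeff_Qp]
    by_cases hβα : β = α
    · subst hβα
      rw [if_pos (fun i => le_refl _), if_pos rfl]
    · rw [if_neg hβα]
      by_cases hle : ∀ i, α i ≤ β i
      · exfalso
        have h1 : (β.sum fun _ e => e) ≤ p.totalDegree := MvPolynomial.le_totalDegree hβ
        have h2 : ∑ i, α i ≤ ∑ i, β i := Finset.sum_le_sum fun i _ => hle i
        have h3 : ∑ i, β i ≤ ∑ i, α i := by
          rw [← sum_fin, ← sum_fin]; exact h1.trans hmax
        have heq : ∀ i, α i = β i := by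
          by_contra hne
          push_neg at hne
          obtain ⟨i0, hi0⟩ := hne
          have hlt : α i0 < β i0 := lt_of_le_of_ne (hle i0) hi0
          have : ∑ i, α i < ∑ i, β i :=
            Finset.sum_lt_sum (fun i _ => hle i) ⟨i0, Finset.mem_univ _, hlt⟩
          omega
        exact hβα (Finsupp.ext fun i => (heq i).symm)
      · rw [if_neg hle, mul_zero]
  rw [Finset.sum_congr rfl key, Finset.sum_ite_eq' p.support α _, if_pos hα]

lemma deg_T (hM : Mm h 0 ≠ 0) (p : MvPolynomial (Fin d) ℂ) :
    (Tmap d h p).totalDegree = p.totalDegree := by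
  rcases eq_or_ne p 0 with rfl | hp
  · rw [map_zero]
  refine le_antisymm (deg_T_le p) ?_
  obtain ⟨α, hα, hsup⟩ := Finset.exists_mem_eq_sup p.support
    (MvPolynomial.support_nonempty.2 hp) (fun s => s.sum fun _ e => e)
  have hmax : p.totalDegree ≤ α.sum fun _ e => e := le_of_eq hsup
  have hne : MvPolynomial.coeff α (Tmap d h p) ≠ 0 := by
    rw [coeff_T_top p α hα hmax]
    exact mul_ne_zero (MvPolynomial.mem_support_iff.1 hα)
      (Finset.prod_ne_zero_iff.2 fun i _ => cc_diag_ne hM _)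
  calc p.totalDegree ≤ α.sum fun _ e => e := hmax
    _ ≤ (Tmap d h p).totalDegree :=
        MvPolynomial.le_totalDegree (MvPolynomial.mem_support_iff.2 hne)

lemma T_inj (hM : Mm h 0 ≠ 0) : Function.Injective (Tmap d h) := by
  rw [injective_iff_map_eq_zero]
  intro p hp
  by_contra hne
  obtain ⟨α, hα, hsup⟩ := Finset.exists_mem_eq_sup p.support
    (MvPolynomial.support_nonempty.2 hne) (fun s => s.sum fun _ e => e)
  have h0 : MvPolynomial.coeff α (Tmap d h p) ≠ 0 := by
    rw [coeff_T_top p α hα (le_of_eq hsup)]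
    exact mul_ne_zero (MvPolynomial.mem_support_iff.1 hα)
      (Finset.prod_ne_zero_iff.2 fun i _ => cc_diag_ne hM _)
  rw [hp] at h0
  exact h0 rfl

lemma T_bij (hM : Mm h 0 ≠ 0) (n : ℕ) :
    Set.BijOn (Tmap d h) {p : MvPolynomial (Fin d) ℂ | p.totalDegree ≤ n}
      {p : MvPolynomial (Fin d) ℂ | p.totalDegree ≤ n} := by
  set V := MvPolynomial.restrictTotalDegree (Fin d) ℂ n with hV
  have hmaps : ∀ p ∈ V, Tmap d h p ∈ V := by
    intro p hp
    rw [MvPolynomial.mem_restrictTotalDegree] at *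
    rw [deg_T hM]
    exact hp
  set Tres : V →ₗ[ℂ] V := (Tmap d h).restrict hmaps with hTres
  have hinj : Function.Injective Tres := by
    intro a b hab
    apply Subtype.ext
    apply T_inj hM
    have := congrArg Subtype.val hab
    simpa [hTres, LinearMap.restrict_apply] using this
  have hsurj : Function.Surjective Tres := LinearMap.injective_iff_surjective.1 hinj
  refine ⟨fun p hp => ?_, fun a _ b _ hab => T_inj hM hab, fun q hq => ?_⟩
  · simp only [Set.mem_setOf_eq] at *
    rw [deg_T hM]
    exact hp
  · obtain ⟨pv, hpv⟩ := hsurj ⟨q, (MvPolynomial.mem_restrictTotalDegree _ _ _).2 hq⟩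
    refine ⟨pv.1, (MvPolynomial.mem_restrictTotalDegree _ _ _).1 pv.2, ?_⟩
    have := congrArg Subtype.val hpv
    simpa [hTres, LinearMap.restrict_apply] using this

lemma coord_point (hh : 0 < h) (m : ℕ) (X : ℂ) (t : ℝ) :
    (t : ℂ) ^ m * Complex.exp (-((X - t) * (X - t)) / (2 * (h : ℂ))) *
      Complex.exp (-((t : ℂ) * t) / (2 * (h : ℂ))) =
    Complex.exp (-(X * X) / (4 * (h : ℂ))) *
      ((t : ℂ) ^ m * Complex.exp (-(((t : ℂ) - X / 2) ^ 2) / (h : ℂ))) := by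
  have hne : (h : ℂ) ≠ 0 := Complex.ofReal_ne_zero.2 hh.ne'
  have hexp : -((X - t) * (X - t)) / (2 * (h : ℂ)) + -((t : ℂ) * t) / (2 * (h : ℂ)) =
      -(X * X) / (4 * (h : ℂ)) + -(((t : ℂ) - X / 2) ^ 2) / (h : ℂ) := by
    field_simp
    ring
  rw [mul_assoc, ← Complex.exp_add, hexp, Complex.exp_add]
  ring

lemma coord_int (hh : 0 < h) (m : ℕ) (X : ℂ) :
    Integrable (fun t : ℝ => (t : ℂ) ^ m * Complex.exp (-((X - t) * (X - t)) / (2 * (h : ℂ))) *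
      Complex.exp (-((t : ℂ) * t) / (2 * (h : ℂ)))) := by
  refine (((intF hh m (X / 2)).const_mul (Complex.exp (-(X * X) / (4 * (h : ℂ))))).congr ?_)
  exact Eventually.of_forall fun t => (coord_point hh m X t).symm

lemma coord (hh : 0 < h) (m : ℕ) (X : ℂ) :
    (∫ t : ℝ, (t : ℂ) ^ m * Complex.exp (-((X - t) * (X - t)) / (2 * (h : ℂ))) *
      Complex.exp (-((t : ℂ) * t) / (2 * (h : ℂ)))) =
    Complex.exp (-(X * X) / (4 * (h : ℂ))) * GG h m (X / 2) := by
  simp_rw [coord_point hh m X]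
  rw [integral_const_mul, ← FF, lemA hh]

open Matrix in
lemma expand_exp (d : ℕ) (a : ℂ) (v : Fin d → ℂ) :
    Complex.exp (-(v ⬝ᵥ v) / a) = ∏ i, Complex.exp (-(v i * v i) / a) := by
  rw [← Complex.exp_sum]
  congr 1
  rw [dotProduct, ← Finset.sum_div, ← Finset.sum_neg_distrib]

open Matrix in
lemma integrand_eq (d : ℕ) (α : Fin d →₀ ℕ) (c : ℂ) (x : Fin d → ℂ) (y : Fin d → ℝ) :
    Complex.exp (-(((x - fun i => ((y i : ℝ) : ℂ)) ⬝ᵥ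
        (x - fun i => ((y i : ℝ) : ℂ)))) / (2 * (h : ℂ))) *
      MvPolynomial.eval (fun i => ((y i : ℝ) : ℂ)) (MvPolynomial.monomial α c) *
      Complex.exp (-(((fun i => ((y i : ℝ) : ℂ)) ⬝ᵥ
        fun i => ((y i : ℝ) : ℂ))) / (2 * (h : ℂ))) =
    c * ∏ i, ((y i : ℂ) ^ (α i) *
      Complex.exp (-((x i - y i) * (x i - y i)) / (2 * (h : ℂ))) *
      Complex.exp (-(((y i : ℝ) : ℂ) * (y i)) / (2 * (h : ℂ)))) := by
  rw [expand_exp, expand_exp, MvPolynomial.eval_monomial,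
    Finsupp.prod_fintype _ _ (fun i => pow_zero _)]
  simp only [Pi.sub_apply]
  rw [Finset.prod_mul_distrib, Finset.prod_mul_distrib]
  ring

open Matrix in
lemma monomial_int (hh : 0 < h) (d : ℕ) (α : Fin d →₀ ℕ) (c : ℂ) (x : Fin d → ℂ) :
    Integrable (fun y : Fin d → ℝ =>
      Complex.exp (-(((x - fun i => ((y i : ℝ) : ℂ)) ⬝ᵥ
          (x - fun i => ((y i : ℝ) : ℂ)))) / (2 * (h : ℂ))) *
        MvPolynomial.eval (fun i => ((y i : ℝ) : ℂ)) (MvPolynomial.monomial α c) *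
        Complex.exp (-(((fun i => ((y i : ℝ) : ℂ)) ⬝ᵥ
          fun i => ((y i : ℝ) : ℂ))) / (2 * (h : ℂ)))) := by
  have base : Integrable (fun y : Fin d → ℝ => ∏ i, ((y i : ℂ) ^ (α i) *
      Complex.exp (-((x i - y i) * (x i - y i)) / (2 * (h : ℂ))) *
      Complex.exp (-(((y i : ℝ) : ℂ) * (y i)) / (2 * (h : ℂ))))) :=
    Integrable.fintype_prod_dep fun i => coord_int hh (α i) (x i)
  exact (base.const_mul c).congr
    (Eventually.of_forall fun y => (integrand_eq d α c x y).symm)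

open Matrix in
lemma monomial_case (hh : 0 < h) (d : ℕ) (α : Fin d →₀ ℕ) (c : ℂ) (x : Fin d → ℂ) :
    (∫ y : Fin d → ℝ,
      Complex.exp (-(((x - fun i => ((y i : ℝ) : ℂ)) ⬝ᵥ
          (x - fun i => ((y i : ℝ) : ℂ)))) / (2 * (h : ℂ))) *
        MvPolynomial.eval (fun i => ((y i : ℝ) : ℂ)) (MvPolynomial.monomial α c) *
        Complex.exp (-(((fun i => ((y i : ℝ) : ℂ)) ⬝ᵥ
          fun i => ((y i : ℝ) : ℂ))) / (2 * (h : ℂ)))) =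
    (c * MvPolynomial.eval x (Qp d h α)) * Complex.exp (-(x ⬝ᵥ x) / (4 * (h : ℂ))) := by
  simp_rw [integrand_eq d α c x]
  rw [integral_const_mul]
  rw [MeasureTheory.integral_fintype_prod_volume_eq_prod
    (fun i (t : ℝ) => (t : ℂ) ^ (α i) *
      Complex.exp (-((x i - t) * (x i - t)) / (2 * (h : ℂ))) *
      Complex.exp (-((t : ℂ) * t) / (2 * (h : ℂ))))]
  have : ∀ i ∈ Finset.univ, (∫ t : ℝ, (t : ℂ) ^ (α i) *
      Complex.exp (-((x i - t) * (x i - t)) / (2 * (h : ℂ))) *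
      Complex.exp (-((t : ℂ) * t) / (2 * (h : ℂ)))) =
      Complex.exp (-(x i * x i) / (4 * (h : ℂ))) * GG h (α i) (x i / 2) :=
    fun i _ => coord hh (α i) (x i)
  rw [Finset.prod_congr rfl this, Finset.prod_mul_distrib, eval_Qp, ← expand_exp]
  ring

open Matrix in
lemma main_int {h : ℝ} (hh : 0 < h) (d : ℕ) (p : MvPolynomial (Fin d) ℂ) (x : Fin d → ℂ) :
    (∫ y : Fin d → ℝ,
      Complex.exp (-(((x - fun i => ((y i : ℝ) : ℂ)) ⬝ᵥ
          (x - fun i => ((y i : ℝ) : ℂ)))) / (2 * (h : ℂ))) *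
        MvPolynomial.eval (fun i => ((y i : ℝ) : ℂ)) p *
        Complex.exp (-(((fun i => ((y i : ℝ) : ℂ)) ⬝ᵥ
          fun i => ((y i : ℝ) : ℂ))) / (2 * (h : ℂ)))) =
    MvPolynomial.eval x (Tmap d h p) * Complex.exp (-(x ⬝ᵥ x) / (4 * (h : ℂ))) := by
  have hev : ∀ Y : Fin d → ℂ, MvPolynomial.eval Y p =
      ∑ α ∈ p.support, MvPolynomial.eval Y
        (MvPolynomial.monomial α (MvPolynomial.coeff α p)) := by
    intro Y
    conv_lhs => rw [MvPolynomial.as_sum p]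
    rw [map_sum]
  simp_rw [hev, Finset.mul_sum, Finset.sum_mul]
  rw [integral_finset_sum _ (fun α _ => monomial_int hh d α _ x)]
  rw [Finset.sum_congr rfl (fun α _ => monomial_case hh d α (MvPolynomial.coeff α p) x),
    ← Finset.sum_mul]
  congr 1
  rw [Tmap_apply, map_sum]
  exact Finset.sum_congr rfl fun α _ => by rw [MvPolynomial.smul_eval]

end FBIaux

/-- The FBI–Bargmann transform with phase `φ₀(x,y) = (i/2)(x-y)²` maps
Hermite-type functions `p(y) e^{-y²/(2h)}` to `P(x) e^{-x²/(4h)}`: there is a linear map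
`T` on polynomials with `deg(T p) = deg p`, such that for every polynomial `p` and every
`x ∈ ℂ^d`,
`∫_{ℝ^d} e^{-((x-y)·(x-y))/(2h)} p(y) e^{-(y·y)/(2h)} dy = (T p)(x) e^{-(x·x)/(4h)}`,
and for every `n` the map `T` is a bijection from polynomials of degree `≤ n` onto
polynomials of degree `≤ n`. -/
theorem statement17 (d : ℕ) (hd : 1 ≤ d) (h : ℝ) (hh : 0 < h) :
    ∃ T : MvPolynomial (Fin d) ℂ →ₗ[ℂ] MvPolynomial (Fin d) ℂ,
      (∀ p : MvPolynomial (Fin d) ℂ,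
        (T p).totalDegree = p.totalDegree ∧
        ∀ x : Fin d → ℂ,
          (∫ y : Fin d → ℝ,
            Complex.exp (-(((x - fun i => ((y i : ℝ) : ℂ)) ⬝ᵥ
                (x - fun i => ((y i : ℝ) : ℂ)))) / (2 * (h : ℂ))) *
              MvPolynomial.eval (fun i => ((y i : ℝ) : ℂ)) p *
              Complex.exp (-(((fun i => ((y i : ℝ) : ℂ)) ⬝ᵥ
                fun i => ((y i : ℝ) : ℂ))) / (2 * (h : ℂ)))) =
          MvPolynomial.eval x (T p) * Complex.exp (-(x ⬝ᵥ x) / (4 * (h : ℂ)))) ∧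
      (∀ n : ℕ, Set.BijOn (⇑T)
        {p : MvPolynomial (Fin d) ℂ | p.totalDegree ≤ n}
        {p : MvPolynomial (Fin d) ℂ | p.totalDegree ≤ n}) := by
  refine ⟨Tmap d h, fun p => ⟨deg_T (Mm0_ne hh) p, fun x => main_int hh d p x⟩,
    fun n => T_bij (Mm0_ne hh) n⟩
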